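/- Let (G,T) be a terminal network and e ∈ E(G). Then e is essential for (G,T) if and only if there exists a partition 𝒯 of T such that every minimum multiway cut for 𝒯 in G contains e. -/

import Mathlib

open Finset

variable {V : Type}

/-- Total capacity of a terminal set: sum of degrees. -/
def capacity [Fintype V] (G : SimpleGraph V) [DecidableRel G.Adj] (T : Finset V) : ℕ :=
  ∑ t ∈ T, G.degree t

/-- `P` is a partition of the set `T` into nonempty parts. -/
def IsPartitionOn (T : Set V) (P : Set (Set V)) : Prop :=
  (∀ p ∈ P, p.Nonempty ∧ p ⊆ T) ∧ ∀ t ∈ T, ∃! p, p ∈ P ∧ t ∈ p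

/-- `X` is a multiway cut for the partition `P` in `G`: no component of `G - X`
contains terminals from two distinct parts. -/
def IsMultiwayCut (G : SimpleGraph V) (P : Set (Set V)) (X : Finset (Sym2 V)) : Prop :=
  ↑X ⊆ G.edgeSet ∧ ∀ u v : V, ∀ p ∈ P, ∀ q ∈ P, u ∈ p → v ∈ q →
    (G.deleteEdges ↑X).Reachable u v → p = q

def IsMinMultiwayCut (G : SimpleGraph V) (P : Set (Set V)) (X : Finset (Sym2 V)) : Prop :=
  IsMultiwayCut G P X ∧ ∀ Y : Finset (Sym2 V), IsMultiwayCut G P Y → X.card ≤ Y.card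

/-- `R` is a set of cut requests over `T`: unordered pairs of distinct terminals. -/
def CutRequests (T : Set V) (R : Set (Sym2 V)) : Prop :=
  ∀ r ∈ R, ¬ r.IsDiag ∧ ∀ v ∈ r, v ∈ T

/-- `X` is a multicut for the requests `R` in `G`. -/
def IsMulticut (G : SimpleGraph V) (R : Set (Sym2 V)) (X : Finset (Sym2 V)) : Prop :=
  ↑X ⊆ G.edgeSet ∧ ∀ u v : V, s(u, v) ∈ R → ¬ (G.deleteEdges ↑X).Reachable u v

def IsMinMulticut (G : SimpleGraph V) (R : Set (Sym2 V)) (X : Finset (Sym2 V)) : Prop :=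
  IsMulticut G R X ∧ ∀ Y : Finset (Sym2 V), IsMulticut G R Y → X.card ≤ Y.card

/-- An edge is essential for `(G,T)` if for some set of cut requests over `T`,
every minimum multicut contains it. -/
def Essential (G : SimpleGraph V) (T : Set V) (e : Sym2 V) : Prop :=
  ∃ R : Set (Sym2 V), CutRequests T R ∧ ∀ X : Finset (Sym2 V), IsMinMulticut G R X → e ∈ X

/-- The edge boundary of `S`: edges with exactly one endpoint in `S`. -/
def edgeBoundary [Fintype V] [DecidableEq V] (G : SimpleGraph V) [DecidableRel G.Adj]
    (S : Finset V) : Finset (Sym2 V) :=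
  G.edgeFinset.filter (fun e => ∃ u v : V, e = s(u, v) ∧ u ∈ S ∧ v ∉ S)

/-- `cap_T(S) = cap_G(T ∩ S) + δ_G(S)`. -/
def capT [Fintype V] [DecidableEq V] (G : SimpleGraph V) [DecidableRel G.Adj]
    (T S : Finset V) : ℕ :=
  capacity G (T ∩ S) + (edgeBoundary G S).card

/-- `X` is an `(A,B)`-edge cut in `G`. -/
def IsEdgeCut (G : SimpleGraph V) (A B : Finset V) (X : Finset (Sym2 V)) : Prop :=
  ↑X ⊆ G.edgeSet ∧ ∀ a ∈ A, ∀ b ∈ B, ¬ (G.deleteEdges ↑X).Reachable a b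

def IsMinEdgeCut (G : SimpleGraph V) (A B : Finset V) (X : Finset (Sym2 V)) : Prop :=
  IsEdgeCut G A B X ∧ ∀ Y : Finset (Sym2 V), IsEdgeCut G A B Y → X.card ≤ Y.card


/-- The closed neighborhood `N_G[S]`. -/
def closedNbhd (G : SimpleGraph V) (S : Set V) : Set V :=
  S ∪ {v | ∃ u ∈ S, G.Adj u v}

/-- The (exterior) open neighborhood `N_G(S)`. -/
def extNbhd [Fintype V] [DecidableEq V] (G : SimpleGraph V) [DecidableRel G.Adj]
    (S : Finset V) : Finset V :=
  Finset.univ.filter (fun v => v ∉ S ∧ ∃ u ∈ S, G.Adj u v)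

/-- The graph `G_S`: the edges of `G` with at least one endpoint in `S`
(vertices outside `N_G[S]` are isolated). -/
def recGraph [DecidableEq V] (G : SimpleGraph V) (S : Finset V) : SimpleGraph V where
  Adj u v := G.Adj u v ∧ (u ∈ S ∨ v ∈ S)
  symm := ⟨fun u v h => ⟨h.1.symm, h.2.symm⟩⟩
  loopless := ⟨fun v h => G.irrefl h.1⟩

instance [DecidableEq V] (G : SimpleGraph V) [DecidableRel G.Adj] (S : Finset V) :
    DecidableRel (recGraph G S).Adj :=
  fun u v => inferInstanceAs (Decidable (G.Adj u v ∧ (u ∈ S ∨ v ∈ S)))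

/-- The terminal set `T(S) = (T ∩ S) ∪ N_G(S)` of the recursive instance at `S`. -/
def recTerminals [Fintype V] [DecidableEq V] (G : SimpleGraph V) [DecidableRel G.Adj]
    (T S : Finset V) : Finset V :=
  (T ∩ S) ∪ extNbhd G S

/-- An indexed partition `T = T_1 ∪ ... ∪ T_s` of `T` into nonempty disjoint parts. -/
def IsIndexedPartition [DecidableEq V] (T : Finset V) {s : ℕ} (Tp : Fin s → Finset V) : Prop :=
  (∀ i, (Tp i).Nonempty) ∧ (∀ i j, i ≠ j → Disjoint (Tp i) (Tp j)) ∧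
    Finset.univ.biUnion Tp = T

def IsMultiwayCutFam (G : SimpleGraph V) {s : ℕ} (Tp : Fin s → Finset V)
    (X : Finset (Sym2 V)) : Prop :=
  ↑X ⊆ G.edgeSet ∧ ∀ i j : Fin s, i ≠ j → ∀ u ∈ Tp i, ∀ v ∈ Tp j,
    ¬ (G.deleteEdges ↑X).Reachable u v

/-- The set `E(T,V)` of edges incident to at least one terminal. -/
def terminalEdges [Fintype V] [DecidableEq V] (G : SimpleGraph V) [DecidableRel G.Adj]
    (T : Finset V) : Finset (Sym2 V) :=
  G.edgeFinset.filter (fun e => ∃ t ∈ T, t ∈ e)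

/-- Independence of the columns indexed by the finite set `X` in the
linear representation `v`. -/
def FIndep (F : Type) [Field F] {W E : Type} [AddCommGroup W] [Module F W]
    (v : E → W) (X : Finset E) : Prop :=
  LinearIndependent F (fun x : {a // a ∈ X} => v x.1)


/-- Multicuts for the request set induced by a partition coincide with multiway cuts. -/
lemma multicut_iff_multiwaycut (G : SimpleGraph V) (T : Finset V) (P : Set (Set V))
    (hP : IsPartitionOn (↑T) P) (X : Finset (Sym2 V)) :
    IsMulticut G {r : Sym2 V | ∃ u v : V, ∃ p ∈ P, ∃ q ∈ P,
        r = s(u, v) ∧ u ∈ p ∧ v ∈ q ∧ p ≠ q} X ↔ IsMultiwayCut G P X := by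
  constructor
  · rintro ⟨hsub, hsep⟩
    refine ⟨hsub, fun u v p hp q hq hu hv hr => ?_⟩
    by_contra hpq
    exact hsep u v ⟨u, v, p, hp, q, hq, rfl, hu, hv, hpq⟩ hr
  · rintro ⟨hsub, hmw⟩
    refine ⟨hsub, fun u v hr hreach => ?_⟩
    obtain ⟨u', v', p, hp, q, hq, heq, hu, hv, hpq⟩ := hr
    rcases Sym2.eq_iff.mp heq with ⟨rfl, rfl⟩ | ⟨rfl, rfl⟩
    · exact hpq (hmw u v p hp q hq hu hv hreach)
    · exact hpq (hmw v u p hp q hq hu hv hreach.symm)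

/-- An edge `e` of `G` is essential for `(G,T)` iff there is a
partition `𝒯` of `T` such that every minimum multiway cut for `𝒯` contains `e`. -/
theorem essential_iff_exists_partition [Fintype V]
    (G : SimpleGraph V) (T : Finset V) (e : Sym2 V) (he : e ∈ G.edgeSet) :
    Essential G (↑T) e ↔
      ∃ P : Set (Set V), IsPartitionOn (↑T) P ∧
        ∀ X : Finset (Sym2 V), IsMinMultiwayCut G P X → e ∈ X := by
  classical
  constructor
  · rintro ⟨R, hR, hall⟩
    -- a multicut exists: delete all edges
    have hbot : ∀ u v : V, (G.deleteEdges ↑(Set.toFinite G.edgeSet).toFinset).Reachable u v → u = v := by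
      intro u v hr
      have : G.deleteEdges ↑(Set.toFinite G.edgeSet).toFinset = ⊥ := by
        ext a b
        simp [SimpleGraph.deleteEdges_adj, Set.Finite.coe_toFinset]
      rw [this] at hr
      exact SimpleGraph.reachable_bot.mp hr
    have hX0 : IsMulticut G R (Set.toFinite G.edgeSet).toFinset := by
      refine ⟨by rw [Set.Finite.coe_toFinset], fun u v hr hreach => ?_⟩
      have := hbot u v hreach
      subst this
      exact (hR _ hr).1 (Sym2.mk_isDiag_iff.mpr rfl)
    have hex : ∃ n : ℕ, ∃ X : Finset (Sym2 V), IsMulticut G R X ∧ X.card = n :=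
      ⟨_, _, hX0, rfl⟩
    obtain ⟨X, hX, hcard⟩ := Nat.find_spec hex
    have hmin : ∀ Y : Finset (Sym2 V), IsMulticut G R Y → X.card ≤ Y.card := by
      intro Y hY
      rw [hcard]
      exact Nat.find_le ⟨Y, hY, rfl⟩
    have hXmin : IsMinMulticut G R X := ⟨hX, hmin⟩
    have heX : e ∈ X := hall X hXmin
    -- partition of T by components of G - X
    set H := G.deleteEdges ↑X with hH
    refine ⟨{p : Set V | ∃ u : V, u ∈ T ∧ p = {t : V | t ∈ T ∧ H.Reachable t u}}, ?_, ?_⟩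
    · constructor
      · rintro p ⟨u, hu, rfl⟩
        exact ⟨⟨u, hu, SimpleGraph.Reachable.refl u⟩, fun t ht => ht.1⟩
      · intro t ht
        refine ⟨{s : V | s ∈ T ∧ H.Reachable s t}, ⟨⟨t, ht, rfl⟩, ht, SimpleGraph.Reachable.refl t⟩, ?_⟩
        rintro q ⟨⟨u, hu, rfl⟩, htT, hrt⟩
        ext s
        exact ⟨fun hs => ⟨hs.1, hs.2.trans hrt.symm⟩, fun hs => ⟨hs.1, hs.2.trans hrt⟩⟩
    · intro Y hY
      -- X is a multiway cut for this partition
      have hXmw : IsMultiwayCut G {p : Set V | ∃ u : V, u ∈ T ∧ p = {t : V | t ∈ T ∧ H.Reachable t u}} X := by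
        refine ⟨hX.1, ?_⟩
        rintro u v p ⟨u₀, hu₀, rfl⟩ q ⟨v₀, hv₀, rfl⟩ hu hv hr
        ext s
        constructor
        · rintro ⟨hsT, hs⟩
          exact ⟨hsT, ((hs.trans hu.2.symm).trans hr).trans hv.2⟩
        · rintro ⟨hsT, hs⟩
          exact ⟨hsT, ((hs.trans hv.2.symm).trans hr.symm).trans hu.2⟩
      -- Y is a multicut for R
      have hYmc : IsMulticut G R Y := by
        refine ⟨hY.1.1, fun u v hr hreach => ?_⟩
        have huT : u ∈ T := (hR _ hr).2 u (Sym2.mem_mk_left u v)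
        have hvT : v ∈ T := (hR _ hr).2 v (Sym2.mem_mk_right u v)
        have hpq := hY.1.2 u v {t : V | t ∈ T ∧ H.Reachable t u} ⟨u, huT, rfl⟩
          {t : V | t ∈ T ∧ H.Reachable t v} ⟨v, hvT, rfl⟩
          ⟨huT, SimpleGraph.Reachable.refl u⟩ ⟨hvT, SimpleGraph.Reachable.refl v⟩ hreach
        have : u ∈ {t : V | t ∈ T ∧ H.Reachable t v} := hpq ▸ (⟨huT, SimpleGraph.Reachable.refl u⟩ :
          u ∈ {t : V | t ∈ T ∧ H.Reachable t u})
        exact hX.2 u v hr this.2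
      have hYcard : Y.card = X.card :=
        le_antisymm (hY.2 X hXmw) (hmin Y hYmc)
      exact hall Y ⟨hYmc, fun Z hZ => hYcard ▸ hmin Z hZ⟩
  · rintro ⟨P, hP, hall⟩
    refine ⟨{r : Sym2 V | ∃ u v : V, ∃ p ∈ P, ∃ q ∈ P,
        r = s(u, v) ∧ u ∈ p ∧ v ∈ q ∧ p ≠ q}, ?_, ?_⟩
    · rintro r ⟨u, v, p, hp, q, hq, rfl, hu, hv, hpq⟩
      have huT : (u : V) ∈ (↑T : Set V) := (hP.1 p hp).2 hu
      constructor
      · rw [Sym2.mk_isDiag_iff]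
        rintro rfl
        obtain ⟨w, -, hw⟩ := hP.2 u huT
        exact hpq ((hw p ⟨hp, hu⟩).trans (hw q ⟨hq, hv⟩).symm)
      · intro w hw
        rcases Sym2.mem_iff.mp hw with rfl | rfl
        · exact huT
        · exact (hP.1 q hq).2 hv
    · intro X hX
      refine hall X ?_
      rw [IsMinMultiwayCut]
      constructor
      · exact (multicut_iff_multiwaycut G T P hP X).mp hX.1
      · intro Y hY
        exact hX.2 Y ((multicut_iff_multiwaycut G T P hP Y).mpr hY)
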